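/- Transformation of the first family under G-conjugation: for all B₁,B₂,D₁,D₂,E₁,E₂,E₃ ∈ ℂ, every ω ∈ ℂ with ω³ = 1, and every z ∈ ℂ with z ≠ 0, one has G · K_I(z; B₁,B₂,D₁,D₂,E₁,E₂,E₃) · G⁻¹ = K_I(z; B₁, ω²B₂, ω²D₁, D₂, E₁, ωE₂, ωE₃), where G = diag(1, ω, ω²). -/
import Mathlib


open Matrix Kronecker

/-- The matrix `T` with `T_{ij} = 1` iff `i + j = 2`. -/
noncomputable def Tmat : Matrix (Fin 3) (Fin 3) ℂ :=
  fun i j => if (i : ℕ) + (j : ℕ) = 2 then 1 else 0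

noncomputable def KI0 (z D₁ D₂ E₁ : ℂ) : Matrix (Fin 3) (Fin 3) ℂ :=
  E₁ ^ 2 • !![D₂ ^ 2 * z ^ 2, D₁ * D₂ * (z ^ 4 - 1), D₁ ^ 2 * z ^ 2 * (z ^ 4 - 1);
      0, D₂ ^ 2 * z ^ 2, D₁ * D₂ * (z ^ 4 - 1);
      0, 0, D₂ ^ 2 * z ^ 2]

noncomputable def KI1 (z B₁ B₂ D₁ E₂ : ℂ) : Matrix (Fin 3) (Fin 3) ℂ :=
  (-(D₁ * E₂ * z ^ 2)) • !![B₁, 0, 0; 0, B₁, B₂ * (1 - z ^ 4); 0, 0, B₁ * z ^ 4]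

/-- The first family of `K`-matrices. -/
noncomputable def KI (z B₁ B₂ D₁ D₂ E₁ E₂ E₃ : ℂ) : Matrix (Fin 3) (Fin 3) ℂ :=
  KI0 z D₁ D₂ E₁ - z ^ 6 • (Tmat * KI0 z⁻¹ D₂ D₁ E₃ * Tmat)
    + KI1 z B₁ B₂ D₁ E₂ - z ^ 6 • (Tmat * KI1 z⁻¹ B₂ B₁ D₂ E₂ * Tmat)

/-- `G = diag(1, ω, ω²)`. -/
noncomputable def Gmat (ω : ℂ) : Matrix (Fin 3) (Fin 3) ℂ :=
  Matrix.diagonal ![1, ω, ω ^ 2]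

set_option maxHeartbeats 1000000 in
lemma KI_eq (z B₁ B₂ D₁ D₂ E₁ E₂ E₃ : ℂ) (hz : z ≠ 0) :
    KI z B₁ B₂ D₁ D₂ E₁ E₂ E₃ =
    !![E₁^2*D₂^2*z^2 - E₃^2*D₁^2*z^4 - D₁*E₂*B₁*z^2 + D₂*E₂*B₂,
       E₁^2*D₁*D₂*(z^4-1),
       E₁^2*D₁^2*z^2*(z^4-1);
       E₃^2*D₁*D₂*(z^6-z^2) + D₂*E₂*B₁*(z^4-1),
       E₁^2*D₂^2*z^2 - E₃^2*D₁^2*z^4 - D₁*E₂*B₁*z^2 + D₂*E₂*B₂*z^4,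
       (z^4-1)*(E₁^2*D₁*D₂ + D₁*E₂*B₂*z^2);
       E₃^2*D₂^2*(z^4-1),
       E₃^2*D₁*D₂*(z^6-z^2),
       E₁^2*D₂^2*z^2 - E₃^2*D₁^2*z^4 - D₁*E₂*B₁*z^6 + D₂*E₂*B₂*z^4] := by
  ext i j
  fin_cases i <;> fin_cases j <;>
    simp [KI, KI0, KI1, Tmat, Matrix.mul_apply, Fin.sum_univ_succ,
      Matrix.vecHead, Matrix.vecTail] <;>
    (try field_simp) <;> ring

set_option maxHeartbeats 1000000 in
/-- Transformation of the first family under `G`-conjugation. -/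
theorem KI_G_conjugation (B₁ B₂ D₁ D₂ E₁ E₂ E₃ ω : ℂ) (hω : ω ^ 3 = 1)
    (z : ℂ) (hz : z ≠ 0) :
    Gmat ω * KI z B₁ B₂ D₁ D₂ E₁ E₂ E₃ * Matrix.diagonal ![1, ω ^ 2, ω] =
      KI z B₁ (ω ^ 2 * B₂) (ω ^ 2 * D₁) D₂ E₁ (ω * E₂) (ω * E₃) := by
  have h4 : ω ^ 4 = ω := by rw [show (4:ℕ) = 3 + 1 from rfl, pow_succ, hω, one_mul]
  have h5 : ω ^ 5 = ω ^ 2 := by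
    rw [show (5:ℕ) = 3 + 2 from rfl, pow_add, hω, one_mul]
  have h6 : ω ^ 6 = 1 := by rw [show (6:ℕ) = 3 * 2 from rfl, pow_mul, hω, one_pow]
  rw [KI_eq _ _ _ _ _ _ _ _ hz, KI_eq _ _ _ _ _ _ _ _ hz]
  ext i j
  fin_cases i <;> fin_cases j <;>
    simp [Gmat, Matrix.mul_apply, Fin.sum_univ_succ, Matrix.diagonal,
      Matrix.vecHead, Matrix.vecTail] <;>
    ring_nf <;>
    simp [hω, h4, h5, h6] <;>
    ring_nf
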